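/- Let N ≥ 2 and let f : Fin N → Fin r and g : Fin N → Fin c represent two crisp partitions of N objects. Let p_U(i) = |f⁻¹(i)|/N and p_V(j) = |g⁻¹(j)|/N be the empirical marginal distributions and P(i,j) = |f⁻¹(i) ∩ g⁻¹(j)|/N the empirical joint distribution, and define the quadratic variation of information VI₂(U,V) = 2·H₂(P) - H₂(p_U) - H₂(p_V), where H₂(x) = 2·(1 - ∑ of the squares of the entries of x). Then VI₂(U,V) = (2/N)·(N-1)·(1 - RI(U,V)), where RI(U,V) = (k₁₁ + k₀₀)/(N·(N-1)/2) is the Rand index. -/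

import Mathlib

/-- The quadratic entropy of a finitely supported probability distribution. -/
noncomputable def quadEntropy {α : Type*} [Fintype α] (x : α → ℝ) : ℝ :=
  2 * (1 - ∑ i, (x i) ^ 2)

/-- The fiber of `i` under `f`, i.e. the cluster of objects labelled `i`. -/
def fiber {N r : ℕ} (f : Fin N → Fin r) (i : Fin r) : Finset (Fin N) :=
  Finset.univ.filter fun x => f x = i

/-- The unordered pairs of distinct objects among `N` objects. -/
def distinctPairs (N : ℕ) : Finset (Sym2 (Fin N)) :=
  Finset.univ.filter fun e => ¬ e.IsDiag

/-- `k₁₁`: the number of unordered pairs of distinct objects lying in the same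
cluster of `f` and in the same cluster of `g`. -/
def k11 {N r c : ℕ} (f : Fin N → Fin r) (g : Fin N → Fin c) : ℕ :=
  ((distinctPairs N).filter fun e => (e.map f).IsDiag ∧ (e.map g).IsDiag).card

/-- `k₀₀`: the number of unordered pairs of distinct objects lying in different
clusters of `f` and in different clusters of `g`. -/
def k00 {N r c : ℕ} (f : Fin N → Fin r) (g : Fin N → Fin c) : ℕ :=
  ((distinctPairs N).filter fun e => ¬ (e.map f).IsDiag ∧ ¬ (e.map g).IsDiag).card

/-- The Rand index of two crisp partitions of `N` objects. -/
noncomputable def randIndex {N r c : ℕ} (f : Fin N → Fin r) (g : Fin N → Fin c) : ℝ :=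
  ((k11 f g : ℝ) + (k00 f g : ℝ)) / ((N : ℝ) * ((N : ℝ) - 1) / 2)

/-- Splitting a filter by another predicate. -/
lemma filter_split {α : Type*} (s : Finset α) (p q : α → Prop)
    [DecidablePred p] [DecidablePred q] :
    (s.filter p).card = (s.filter fun a => p a ∧ q a).card
      + (s.filter fun a => p a ∧ ¬ q a).card := by
  rw [← Finset.filter_filter, ← Finset.filter_filter,
    Finset.card_filter_add_card_filter_not]

/-- 2-to-1 counting: ordered distinct pairs vs unordered distinct pairs. -/
lemma two_mul_card_filter {N : ℕ} (p : Sym2 (Fin N) → Prop) [DecidablePred p] :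
    ((Finset.univ.offDiag : Finset (Fin N × Fin N)).filter fun xy => p (Sym2.mk xy.1 xy.2)).card
      = 2 * ((distinctPairs N).filter p).card := by
  have hmap : ∀ xy ∈ (Finset.univ.offDiag : Finset (Fin N × Fin N)).filter
      fun xy => p (Sym2.mk xy.1 xy.2), Sym2.mk xy.1 xy.2 ∈ (distinctPairs N).filter p := by
    intro xy hxy
    simp only [Finset.mem_filter, Finset.mem_offDiag] at hxy
    simp only [Finset.mem_filter, distinctPairs, Finset.mem_univ, true_and]
    exact ⟨by simpa [Sym2.mk_isDiag_iff] using hxy.1.2.2, hxy.2⟩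
  rw [Finset.card_eq_sum_card_fiberwise hmap]
  rw [Finset.sum_congr rfl (g := fun _ => 2), Finset.sum_const, smul_eq_mul, mul_comm]
  intro e he
  simp only [Finset.mem_filter, distinctPairs, Finset.mem_univ, true_and] at he
  induction e with
  | _ a b =>
    have hab : a ≠ b := by
      intro h; exact he.1 (by simp [h, Sym2.mk_isDiag_iff])
    have : ((Finset.univ.offDiag : Finset (Fin N × Fin N)).filter
        fun xy => p (Sym2.mk xy.1 xy.2)).filter (fun xy => Sym2.mk xy.1 xy.2 = s(a, b))
        = {(a, b), (b, a)} := by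
      ext xy
      simp only [Finset.mem_filter, Finset.mem_offDiag, Finset.mem_univ, true_and,
        Finset.mem_insert, Finset.mem_singleton]
      constructor
      · rintro ⟨-, heq⟩
        rcases Sym2.eq_iff.mp heq with ⟨h1, h2⟩ | ⟨h1, h2⟩
        · left; rw [Prod.ext_iff]; exact ⟨h1, h2⟩
        · right; rw [Prod.ext_iff]; exact ⟨h1, h2⟩
      · rintro (rfl | rfl)
        · exact ⟨⟨hab, he.2⟩, rfl⟩
        · exact ⟨⟨hab.symm, by rw [Sym2.eq_swap]; exact he.2⟩, Sym2.eq_swap⟩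
    rw [this]
    rw [Finset.card_insert_of_notMem (by simp [Prod.ext_iff, hab]), Finset.card_singleton]

/-- Sum of squared fiber cardinalities equals the number of ordered similar pairs. -/
lemma sum_sq_fiber {N : ℕ} {β : Type*} [Fintype β] [DecidableEq β] (h : Fin N → β) :
    ∑ b, ((Finset.univ.filter fun x => h x = b).card) ^ 2
      = ((Finset.univ : Finset (Fin N × Fin N)).filter fun xy => h xy.1 = h xy.2).card := by
  have hmap : ∀ xy ∈ (Finset.univ : Finset (Fin N × Fin N)).filter
      (fun xy => h xy.1 = h xy.2), h xy.1 ∈ (Finset.univ : Finset β) := fun _ _ => Finset.mem_univ _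
  rw [Finset.card_eq_sum_card_fiberwise hmap]
  refine Finset.sum_congr rfl fun b _ => ?_
  have : ((Finset.univ : Finset (Fin N × Fin N)).filter fun xy => h xy.1 = h xy.2).filter
      (fun xy => h xy.1 = b)
      = (Finset.univ.filter fun x => h x = b) ×ˢ (Finset.univ.filter fun x => h x = b) := by
    ext xy
    simp only [Finset.mem_filter, Finset.mem_univ, true_and, Finset.mem_product]
    constructor
    · rintro ⟨heq, hb⟩; exact ⟨hb, heq ▸ hb⟩
    · rintro ⟨h1, h2⟩; exact ⟨h1.trans h2.symm, h1⟩
  rw [this, Finset.card_product, sq]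

/-- Split into diagonal and off-diagonal: ordered similar pairs count. -/
lemma card_similar_ordered {N : ℕ} {β : Type*} [DecidableEq β] (h : Fin N → β) :
    ((Finset.univ : Finset (Fin N × Fin N)).filter fun xy => h xy.1 = h xy.2).card
      = N + 2 * ((distinctPairs N).filter fun e => (e.map h).IsDiag).card := by
  classical
  have hsplit : ((Finset.univ : Finset (Fin N × Fin N)).filter fun xy => h xy.1 = h xy.2)
      = ((Finset.univ : Finset (Fin N)).diag.filter fun xy => h xy.1 = h xy.2)
        ∪ ((Finset.univ : Finset (Fin N)).offDiag.filter fun xy => h xy.1 = h xy.2) := by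
    rw [← Finset.filter_union, Finset.diag_union_offDiag, Finset.univ_product_univ]
  rw [hsplit, Finset.card_union_of_disjoint]
  · congr 1
    · have : ((Finset.univ : Finset (Fin N)).diag.filter fun xy => h xy.1 = h xy.2)
          = (Finset.univ : Finset (Fin N)).diag := by
        refine Finset.filter_true_of_mem fun xy hxy => ?_
        rw [Finset.mem_diag] at hxy
        rw [hxy.2]
      rw [this, Finset.diag_card, Finset.card_univ, Fintype.card_fin]
    · have key := two_mul_card_filter (N := N) (fun e => (e.map h).IsDiag)
      rw [← key]
      congr 1
      ext xy
      simp only [Finset.mem_filter]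
      constructor
      · rintro ⟨h1, h2⟩
        refine ⟨h1, ?_⟩
        obtain ⟨x, y⟩ := xy
        simpa [Sym2.map_pair_eq, Sym2.mk_isDiag_iff] using h2
      · rintro ⟨h1, h2⟩
        refine ⟨h1, ?_⟩
        obtain ⟨x, y⟩ := xy
        simpa [Sym2.map_pair_eq, Sym2.mk_isDiag_iff] using h2
  · exact Finset.disjoint_filter_filter (Finset.disjoint_diag_offDiag _)

lemma card_distinctPairs {N : ℕ} : 2 * (distinctPairs N).card + N = N * N := by
  have key := two_mul_card_filter (N := N) (fun _ => True)
  simp only [Finset.filter_true_of_mem (fun _ _ => trivial)] at key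
  rw [← key, Finset.offDiag_card, Finset.card_univ, Fintype.card_fin]
  have hle : N ≤ N * N := by nlinarith
  omega

theorem VI2_eq_randIndex {N r c : ℕ} (hN : 2 ≤ N)
    (f : Fin N → Fin r) (g : Fin N → Fin c) :
    2 * quadEntropy (fun ij : Fin r × Fin c =>
          (((fiber f ij.1) ∩ (fiber g ij.2)).card : ℝ) / N)
      - quadEntropy (fun i : Fin r => ((fiber f i).card : ℝ) / N)
      - quadEntropy (fun j : Fin c => ((fiber g j).card : ℝ) / N)
      = (2 / (N : ℝ)) * ((N : ℝ) - 1) * (1 - randIndex f g) := by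
  classical
  set h : Fin N → Fin r × Fin c := fun x => (f x, g x) with hh
  have hfib : ∀ ij : Fin r × Fin c, (fiber f ij.1) ∩ (fiber g ij.2)
      = Finset.univ.filter fun x => h x = ij := by
    intro ij
    ext x
    simp [fiber, hh, Prod.ext_iff]
  have hdiagh : ∀ e : Sym2 (Fin N), (e.map h).IsDiag ↔ ((e.map f).IsDiag ∧ (e.map g).IsDiag) := by
    intro e
    induction e with
    | _ a b => simp [hh, Sym2.map_pair_eq, Sym2.mk_isDiag_iff, Prod.ext_iff]
  set A := k11 f g with hA
  set Kf := ((distinctPairs N).filter fun e => (e.map f).IsDiag).card with hKf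
  set Kg := ((distinctPairs N).filter fun e => (e.map g).IsDiag).card with hKg
  set K0 := k00 f g with hK0
  set D := (distinctPairs N).card with hD
  have e1 : ∑ ij : Fin r × Fin c, (((fiber f ij.1) ∩ (fiber g ij.2)).card) ^ 2 = N + 2 * A := by
    have key := (sum_sq_fiber h).trans (card_similar_ordered h)
    rw [hA, k11]
    rw [show ((distinctPairs N).filter fun e => (e.map f).IsDiag ∧ (e.map g).IsDiag)
        = ((distinctPairs N).filter fun e => (e.map h).IsDiag) from
      (Finset.filter_congr fun e _ => by rw [hdiagh e]).symm]
    rw [← key]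
    exact Finset.sum_congr rfl fun ij _ => by rw [hfib ij]
  have e2 : ∑ i, ((fiber f i).card) ^ 2 = N + 2 * Kf :=
    (sum_sq_fiber f).trans (card_similar_ordered f)
  have e3 : ∑ j, ((fiber g j).card) ^ 2 = N + 2 * Kg :=
    (sum_sq_fiber g).trans (card_similar_ordered g)
  -- the four-way partition of distinct pairs
  set X := ((distinctPairs N).filter fun e => (e.map f).IsDiag ∧ ¬ (e.map g).IsDiag).card with hX
  set Y := ((distinctPairs N).filter fun e => ¬ (e.map f).IsDiag ∧ (e.map g).IsDiag).card with hY
  have e4 : Kf + Kg + K0 = D + A := by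
    have h1 : Kf = A + X := by
      rw [hKf, hA, k11, hX,
        filter_split (distinctPairs N) (fun e => (e.map f).IsDiag) (fun e => (e.map g).IsDiag)]
    have h2 : Kg = A + Y := by
      rw [hKg, hA, k11, hY,
        filter_split (distinctPairs N) (fun e => (e.map g).IsDiag) (fun e => (e.map f).IsDiag)]
      congr 1
      · congr 1; apply Finset.filter_congr; intro e _; simp [and_comm]
      · congr 1; apply Finset.filter_congr; intro e _; simp [and_comm]
    have h3 : D = Kf + (Y + K0) := by
      rw [hD, ← Finset.card_filter_add_card_filter_not
        (fun e => (Sym2.map f e).IsDiag) (s := distinctPairs N), hKf]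
      congr 1
      rw [hY, hK0, k00,
        filter_split (distinctPairs N) (fun e => ¬ (e.map f).IsDiag) (fun e => (e.map g).IsDiag)]
    omega
  have e5 : 2 * D + N = N * N := card_distinctPairs
  -- pass to the reals
  have hN0 : (N : ℝ) ≠ 0 := by
    have : 0 < N := lt_of_lt_of_le (by norm_num) hN
    exact_mod_cast this.ne'
  have hN1 : (N : ℝ) - 1 ≠ 0 := by
    have : (2 : ℝ) ≤ N := by exact_mod_cast hN
    intro hcon; linarith
  have s1 : ∑ ij : Fin r × Fin c, ((((fiber f ij.1) ∩ (fiber g ij.2)).card : ℝ) / N) ^ 2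
      = ((N : ℝ) + 2 * A) / (N : ℝ) ^ 2 := by
    simp only [div_pow, ← Finset.sum_div]
    congr 1
    exact_mod_cast e1
  have s2 : ∑ i : Fin r, (((fiber f i).card : ℝ) / N) ^ 2 = ((N : ℝ) + 2 * Kf) / (N : ℝ) ^ 2 := by
    simp only [div_pow, ← Finset.sum_div]
    congr 1
    exact_mod_cast e2
  have s3 : ∑ j : Fin c, (((fiber g j).card : ℝ) / N) ^ 2 = ((N : ℝ) + 2 * Kg) / (N : ℝ) ^ 2 := by
    simp only [div_pow, ← Finset.sum_div]
    congr 1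
    exact_mod_cast e3
  have re4 : (K0 : ℝ) = (D : ℝ) + A - Kf - Kg := by
    have : (Kf : ℝ) + Kg + K0 = (D : ℝ) + A := by exact_mod_cast e4
    linarith
  have re5 : (D : ℝ) = ((N : ℝ) * N - N) / 2 := by
    have : 2 * (D : ℝ) + N = (N : ℝ) * N := by exact_mod_cast e5
    linarith
  simp only [quadEntropy, randIndex, s1, s2, s3, ← hA, ← hK0, re4, re5]
  field_simp
  ring
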